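/- Suppose in addition that X carries a linear order. Then there exists a probability measure g on T consistent with the data whose instrument-response marginal satisfies p_g tᶻ = 0 whenever tᶻ 1 < tᶻ 0 (monotonicity: the treatment taken at the high instrument value is weakly larger), if and only if for every x ∈ X: Σ over x' ≥ x of ∫_Y φ 0 x' dμ ≤ Ψ x + Σ over x' > x of ∫_Y φ 1 x' dμ. -/

import Mathlib

open MeasureTheory
open scoped ENNReal NNReal

namespace SharpIV

variable {X : Type*} [Fintype X] [LinearOrder X]

noncomputable def loCum (a : X → ℝ) (x : X) : ℝ := ∑ z ∈ Finset.univ.filter (· < x), a z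
noncomputable def hiCum (a : X → ℝ) (x : X) : ℝ := ∑ z ∈ Finset.univ.filter (· ≤ x), a z

lemma hiCum_eq (a : X → ℝ) (x : X) : hiCum a x = a x + loCum a x := by
  unfold hiCum loCum
  have h : Finset.univ.filter (· ≤ x) = insert x (Finset.univ.filter (· < x)) := by
    ext z
    simp only [Finset.mem_filter, Finset.mem_univ, true_and, Finset.mem_insert]
    constructor
    · intro hz; rcases lt_or_eq_of_le hz with h1 | h1
      · exact Or.inr h1
      · exact Or.inl h1
    · rintro (rfl | hz); · exact le_refl _
      · exact le_of_lt hz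
  rw [h, Finset.sum_insert (by simp)]

lemma loCum_nonneg (a : X → ℝ) (ha : ∀ z, 0 ≤ a z) (x : X) : 0 ≤ loCum a x :=
  Finset.sum_nonneg fun z _ => ha z

lemma hiCum_le_loCum (a : X → ℝ) (ha : ∀ z, 0 ≤ a z) {x x' : X} (h : x < x') :
    hiCum a x ≤ loCum a x' := by
  apply Finset.sum_le_sum_of_subset_of_nonneg
  · intro z hz
    simp only [Finset.mem_filter, Finset.mem_univ, true_and] at *
    exact lt_of_le_of_lt hz h
  · intro z _ _; exact ha z

lemma loCum_mono (a : X → ℝ) (ha : ∀ z, 0 ≤ a z) {x x' : X} (h : x ≤ x') :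
    loCum a x ≤ loCum a x' := by
  apply Finset.sum_le_sum_of_subset_of_nonneg
  · intro z hz
    simp only [Finset.mem_filter, Finset.mem_univ, true_and] at *
    exact lt_of_lt_of_le hz h
  · intro z _ _; exact ha z

lemma hiCum_le_total (a : X → ℝ) (ha : ∀ z, 0 ≤ a z) (x : X) :
    hiCum a x ≤ ∑ z, a z := by
  apply Finset.sum_le_sum_of_subset_of_nonneg (Finset.filter_subset _ _)
  intro z _ _; exact ha z

lemma cum_cover [Nonempty X] (a : X → ℝ) (ha : ∀ z, 0 ≤ a z) {r : ℝ}
    (h0 : 0 ≤ r) (hr : r < ∑ z, a z) : ∃ x, loCum a x ≤ r ∧ r < hiCum a x := by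
  classical
  have hne : (Finset.univ.filter (fun x => r < hiCum a x)).Nonempty := by
    refine ⟨(Finset.univ : Finset X).max' Finset.univ_nonempty, ?_⟩
    simp only [Finset.mem_filter, Finset.mem_univ, true_and]
    have : Finset.univ.filter (· ≤ (Finset.univ : Finset X).max' Finset.univ_nonempty)
        = Finset.univ := by
      ext z; simp [Finset.le_max' _ z (Finset.mem_univ z)]
    calc r < ∑ z, a z := hr
      _ = hiCum a _ := by rw [hiCum, this]
  set x := (Finset.univ.filter (fun x => r < hiCum a x)).min' hne with hx
  have hxmem := (Finset.univ.filter (fun x => r < hiCum a x)).min'_mem hne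
  rw [← hx] at hxmem
  simp only [Finset.mem_filter, Finset.mem_univ, true_and] at hxmem
  refine ⟨x, ?_, hxmem⟩
  by_contra hcon
  push_neg at hcon
  rcases (Finset.univ.filter (· < x)).eq_empty_or_nonempty with he | hne2
  · rw [loCum, he, Finset.sum_empty] at hcon; exact absurd h0 (not_le.mpr hcon)
  · set m := (Finset.univ.filter (· < x)).max' hne2 with hm
    have hmlt : m < x := by
      have := (Finset.univ.filter (· < x)).max'_mem hne2
      rw [← hm] at this
      simpa using this
    have heq : hiCum a m = loCum a x := by
      unfold hiCum loCum
      congr 1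
      ext z
      simp only [Finset.mem_filter, Finset.mem_univ, true_and]
      constructor
      · intro hz; exact lt_of_le_of_lt hz hmlt
      · intro hz; exact Finset.le_max' _ z (by simpa using hz)
    have : x ≤ m := Finset.min'_le _ m (by simp [heq, hcon])
    exact absurd hmlt (not_lt.mpr this)

lemma cum_pairwise_disjoint (b : X → ℝ) (hb : ∀ z, 0 ≤ b z) {x1 x2 : X} (h : x1 ≠ x2) :
    Disjoint (Set.Ico (loCum b x1) (hiCum b x1)) (Set.Ico (loCum b x2) (hiCum b x2)) := by
  rcases lt_or_gt_of_ne h with hlt | hlt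
  · rw [Set.disjoint_left]
    rintro r ⟨_, h1⟩ ⟨h2, _⟩
    exact absurd (lt_of_lt_of_le h1 (le_trans (hiCum_le_loCum b hb hlt) h2)) (lt_irrefl r)
  · rw [Set.disjoint_right]
    rintro r ⟨_, h1⟩ ⟨h2, _⟩
    exact absurd (lt_of_lt_of_le h1 (le_trans (hiCum_le_loCum b hb hlt) h2)) (lt_irrefl r)

lemma vol_cumIco (a : X → ℝ) (x : X) :
    volume (Set.Ico (loCum a x) (hiCum a x)) = ENNReal.ofReal (a x) := by
  rw [Real.volume_Ico, hiCum_eq]; ring_nf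

lemma row_sum [Nonempty X] (a b : X → ℝ) (ha : ∀ z, 0 ≤ a z) (hb : ∀ z, 0 ≤ b z)
    (hT : ∑ z, a z = ∑ z, b z) (x : X) :
    ∑ x', volume (Set.Ico (loCum a x) (hiCum a x) ∩ Set.Ico (loCum b x') (hiCum b x'))
      = ENNReal.ofReal (a x) := by
  classical
  rw [← vol_cumIco a x]
  rw [← measure_biUnion_finset (μ := volume)
      (fun x1 _ x2 _ h => Disjoint.mono Set.inter_subset_right Set.inter_subset_right
        (cum_pairwise_disjoint b hb h))
      (fun z _ => (measurableSet_Ico.inter measurableSet_Ico))]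
  congr 1
  apply Set.Subset.antisymm
  · intro r hr
    simp only [Set.mem_iUnion] at hr
    obtain ⟨x', _, hr1, _⟩ := hr
    exact hr1
  · intro r hr
    have h0 : 0 ≤ r := le_trans (loCum_nonneg a ha x) hr.1
    have hlt : r < ∑ z, b z := by
      rw [← hT]; exact lt_of_lt_of_le hr.2 (hiCum_le_total a ha x)
    obtain ⟨x', h1, h2⟩ := cum_cover b hb h0 hlt
    simp only [Set.mem_iUnion]
    exact ⟨x', Finset.mem_univ x', hr, h1, h2⟩

lemma support_empty (a b : X → ℝ)
    (hBA : ∀ z, hiCum b z ≤ loCum a z) {x x' : X} (h : x' ≤ x) (ha : ∀ z, 0 ≤ a z) :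
    Set.Ico (loCum a x) (hiCum a x) ∩ Set.Ico (loCum b x') (hiCum b x') = ∅ := by
  ext r
  simp only [Set.mem_inter_iff, Set.mem_Ico, Set.mem_empty_iff_false, iff_false]
  rintro ⟨⟨h1, _⟩, ⟨_, h4⟩⟩
  have : r < loCum a x' := lt_of_lt_of_le h4 (hBA x')
  exact absurd (lt_of_lt_of_le this (loCum_mono a ha h)) (not_lt.mpr h1)



lemma keymin {Y : Type*} [MeasurableSpace Y] (μ ν : Measure Y)
    (f g : Y → ℝ≥0) (hf : Measurable f) (hg : Measurable g)
    (h0 : ∀ B : Set Y, MeasurableSet B → ν B ≤ ∫⁻ y in B, (f y : ℝ≥0∞) ∂μ)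
    (h1 : ∀ B : Set Y, MeasurableSet B → ν B ≤ ∫⁻ y in B, (g y : ℝ≥0∞) ∂μ) :
    ν Set.univ ≤ ∫⁻ y, ((min (f y) (g y) : ℝ≥0) : ℝ≥0∞) ∂μ := by
  set S := {y | f y ≤ g y} with hSdef
  have hS : MeasurableSet S := measurableSet_le hf hg
  have h2 : ν Set.univ = ν S + ν Sᶜ := (measure_add_measure_compl hS).symm
  have e1 : ∫⁻ y in S, (f y : ℝ≥0∞) ∂μ = ∫⁻ y in S, ((min (f y) (g y) : ℝ≥0) : ℝ≥0∞) ∂μ := by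
    apply setLIntegral_congr_fun hS
    intro y (hy : f y ≤ g y)
    beta_reduce
    rw [min_eq_left hy]
  have e2 : ∫⁻ y in Sᶜ, (g y : ℝ≥0∞) ∂μ = ∫⁻ y in Sᶜ, ((min (f y) (g y) : ℝ≥0) : ℝ≥0∞) ∂μ := by
    apply setLIntegral_congr_fun hS.compl
    intro y hy
    beta_reduce
    have : g y ≤ f y := le_of_lt (not_le.mp hy)
    rw [min_eq_right this]
  calc ν Set.univ = ν S + ν Sᶜ := h2
    _ ≤ ∫⁻ y in S, ((min (f y) (g y) : ℝ≥0) : ℝ≥0∞) ∂μ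
        + ∫⁻ y in Sᶜ, ((min (f y) (g y) : ℝ≥0) : ℝ≥0∞) ∂μ := by
        apply add_le_add
        · rw [← e1]; exact h0 S hS
        · rw [← e2]; exact h1 Sᶜ hS.compl
    _ = ∫⁻ y, ((min (f y) (g y) : ℝ≥0) : ℝ≥0∞) ∂μ := by
        exact lintegral_add_compl _ hS


end SharpIV

/-- **Corollary 1: sharp observable implications of binary monotone
instruments.** With linearly ordered treatments, a probability measure on response types
consistent with the data whose instrument-response marginal vanishes on non-monotone types
(`tz 1 < tz 0`) exists if and only if, for every treatment value `x`,
`P[X ≥ x | Z = z₀] ≤ Ψ x + P[X > x | Z = z₁]`. -/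
theorem sharp_binary_monotone_instrument
    {Y : Type*} [MeasurableSpace Y] [Nonempty Y] (μ : Measure Y) [SigmaFinite μ]
    {X : Type*} [Fintype X] [Nonempty X] [DecidableEq X] [LinearOrder X]
    [MeasurableSpace X] [MeasurableSingletonClass X]
    (φ : Fin 2 → X → Y → NNReal) (hφ : ∀ k x, Measurable (φ k x))
    (hmass : ∀ k : Fin 2, ∑ x : X, ∫⁻ y, (φ k x y : ℝ≥0∞) ∂μ = 1) :
    (∃ g : Measure ((Fin 2 → X) × (X → Y)), IsProbabilityMeasure g ∧
      (∀ (k : Fin 2) (x : X) (B : Set Y), MeasurableSet B →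
        g {t | t.1 k = x ∧ t.2 x ∈ B} = ∫⁻ y in B, (φ k x y : ℝ≥0∞) ∂μ) ∧
      (∀ tz : Fin 2 → X, tz 1 < tz 0 → g {t | t.1 = tz} = 0))
    ↔
    (∀ x : X,
      ∑ x' ∈ Finset.univ.filter (fun x' => x ≤ x'), ∫⁻ y, (φ 0 x' y : ℝ≥0∞) ∂μ ≤
        (∫⁻ y, ((min (φ 0 x y) (φ 1 x y) : NNReal) : ℝ≥0∞) ∂μ) +
          ∑ x' ∈ Finset.univ.filter (fun x' => x < x'), ∫⁻ y, (φ 1 x' y : ℝ≥0∞) ∂μ) := by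
  classical
  constructor
  · rintro ⟨g, _hgprob, hcons, hmono⟩ x
    have hev1 : ∀ k : Fin 2, Measurable (fun t : (Fin 2 → X) × (X → Y) => t.1 k) :=
      fun k => (measurable_pi_apply k).comp measurable_fst
    have hev2 : Measurable (fun t : (Fin 2 → X) × (X → Y) => t.2 x) :=
      (measurable_pi_apply x).comp measurable_snd
    have hSk : ∀ (k : Fin 2) (z : X), MeasurableSet {t : (Fin 2 → X) × (X → Y) | t.1 k = z} :=
      fun k z => hev1 k (measurableSet_singleton z)
    have hgk : ∀ (k : Fin 2) (z : X), g {t : (Fin 2 → X) × (X → Y) | t.1 k = z}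
        = ∫⁻ y, (φ k z y : ℝ≥0∞) ∂μ := by
      intro k z
      have := hcons k z Set.univ MeasurableSet.univ
      simpa using this
    -- sum over x' ≥ x
    have hE : ∑ x' ∈ Finset.univ.filter (fun x' => x ≤ x'), ∫⁻ y, (φ 0 x' y : ℝ≥0∞) ∂μ
        = g {t : (Fin 2 → X) × (X → Y) | x ≤ t.1 0} := by
      have hU : {t : (Fin 2 → X) × (X → Y) | x ≤ t.1 0}
          = ⋃ z ∈ Finset.univ.filter (fun x' => x ≤ x'),
              {t : (Fin 2 → X) × (X → Y) | t.1 0 = z} := by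
        ext t
        simp only [Set.mem_setOf_eq, Set.mem_iUnion, Finset.mem_filter, Finset.mem_univ, true_and]
        exact ⟨fun h => ⟨t.1 0, h, rfl⟩, fun ⟨z, hz, he⟩ => he ▸ hz⟩
      rw [hU, measure_biUnion_finset ?_ (fun z _ => hSk 0 z)]
      · exact Finset.sum_congr rfl fun z _ => (hgk 0 z).symm
      · intro z1 _ z2 _ hne
        rw [Function.onFun, Set.disjoint_left]
        rintro t (ht1 : t.1 0 = z1) (ht2 : t.1 0 = z2)
        exact hne (ht1 ▸ ht2 ▸ rfl)
    have hF1 : g {t : (Fin 2 → X) × (X → Y) | x < t.1 1}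
        = ∑ x' ∈ Finset.univ.filter (fun x' => x < x'), ∫⁻ y, (φ 1 x' y : ℝ≥0∞) ∂μ := by
      have hU : {t : (Fin 2 → X) × (X → Y) | x < t.1 1}
          = ⋃ z ∈ Finset.univ.filter (fun x' => x < x'),
              {t : (Fin 2 → X) × (X → Y) | t.1 1 = z} := by
        ext t
        simp only [Set.mem_setOf_eq, Set.mem_iUnion, Finset.mem_filter, Finset.mem_univ, true_and]
        exact ⟨fun h => ⟨t.1 1, h, rfl⟩, fun ⟨z, hz, he⟩ => he ▸ hz⟩
      rw [hU, measure_biUnion_finset ?_ (fun z _ => hSk 1 z)]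
      · exact Finset.sum_congr rfl fun z _ => hgk 1 z
      · intro z1 _ z2 _ hne
        rw [Function.onFun, Set.disjoint_left]
        rintro t (ht1 : t.1 1 = z1) (ht2 : t.1 1 = z2)
        exact hne (ht1 ▸ ht2 ▸ rfl)
    have hNzero : g {t : (Fin 2 → X) × (X → Y) | t.1 1 < t.1 0} = 0 := by
      have hsub : {t : (Fin 2 → X) × (X → Y) | t.1 1 < t.1 0}
          ⊆ ⋃ tz ∈ Finset.univ.filter (fun tz : Fin 2 → X => tz 1 < tz 0),
              {t : (Fin 2 → X) × (X → Y) | t.1 = tz} := by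
        intro t ht
        simp only [Set.mem_iUnion, Finset.mem_filter, Finset.mem_univ, true_and]
        exact ⟨t.1, ht, rfl⟩
      refine le_antisymm ?_ (zero_le)
      calc g _ ≤ ∑ tz ∈ Finset.univ.filter (fun tz : Fin 2 → X => tz 1 < tz 0),
            g {t : (Fin 2 → X) × (X → Y) | t.1 = tz} :=
          le_trans (measure_mono hsub) (measure_biUnion_finset_le _ _)
        _ = 0 := Finset.sum_eq_zero fun tz htz =>
            hmono tz (by simpa using htz)
    -- the stayer part
    set S2 := {t : (Fin 2 → X) × (X → Y) | t.1 0 = x} ∩ {t | t.1 1 = x} with hS2def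
    have hS2 : MeasurableSet S2 := (hSk 0 x).inter (hSk 1 x)
    set ν := (g.restrict S2).map (fun t : (Fin 2 → X) × (X → Y) => t.2 x) with hνdef
    have hν : ∀ B : Set Y, MeasurableSet B →
        ν B = g (((fun t : (Fin 2 → X) × (X → Y) => t.2 x) ⁻¹' B) ∩ S2) := by
      intro B hB
      rw [hνdef, Measure.map_apply hev2 hB, Measure.restrict_apply (hev2 hB)]
    have hνle : ∀ k : Fin 2, ∀ B : Set Y, MeasurableSet B →
        ν B ≤ ∫⁻ y in B, (φ k x y : ℝ≥0∞) ∂μ := by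
      intro k B hB
      rw [hν B hB, ← hcons k x B hB]
      apply measure_mono
      rintro t ⟨htB, ht0, ht1⟩
      fin_cases k
      · exact ⟨ht0, htB⟩
      · exact ⟨ht1, htB⟩
    have hkey : g S2 ≤ ∫⁻ y, ((min (φ 0 x y) (φ 1 x y) : NNReal) : ℝ≥0∞) ∂μ := by
      have := SharpIV.keymin μ ν (φ 0 x) (φ 1 x) (hφ 0 x) (hφ 1 x)
        (hνle 0) (hνle 1)
      have hνuniv : ν Set.univ = g S2 := by
        rw [hν Set.univ MeasurableSet.univ]; simp
      rwa [hνuniv] at this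
    have hsub : {t : (Fin 2 → X) × (X → Y) | x ≤ t.1 0}
        ⊆ ({t : (Fin 2 → X) × (X → Y) | x < t.1 1} ∪ S2)
          ∪ {t : (Fin 2 → X) × (X → Y) | t.1 1 < t.1 0} := by
      intro t ht
      by_cases hn : t.1 1 < t.1 0
      · exact Or.inr hn
      · push_neg at hn
        rcases lt_or_ge x (t.1 1) with h1 | h1
        · exact Or.inl (Or.inl h1)
        · have h2 : t.1 0 = x := le_antisymm (le_trans hn h1) ht
          have h3 : t.1 1 = x := le_antisymm h1 (le_trans ht hn)
          exact Or.inl (Or.inr ⟨h2, h3⟩)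
    calc ∑ x' ∈ Finset.univ.filter (fun x' => x ≤ x'), ∫⁻ y, (φ 0 x' y : ℝ≥0∞) ∂μ
        = g {t : (Fin 2 → X) × (X → Y) | x ≤ t.1 0} := hE
      _ ≤ g (({t : (Fin 2 → X) × (X → Y) | x < t.1 1} ∪ S2)
            ∪ {t : (Fin 2 → X) × (X → Y) | t.1 1 < t.1 0}) := measure_mono hsub
      _ ≤ (g {t : (Fin 2 → X) × (X → Y) | x < t.1 1} + g S2)
            + g {t : (Fin 2 → X) × (X → Y) | t.1 1 < t.1 0} :=
          le_trans (measure_union_le _ _) (add_le_add (measure_union_le _ _) le_rfl)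
      _ ≤ (∑ x' ∈ Finset.univ.filter (fun x' => x < x'), ∫⁻ y, (φ 1 x' y : ℝ≥0∞) ∂μ
            + ∫⁻ y, ((min (φ 0 x y) (φ 1 x y) : NNReal) : ℝ≥0∞) ∂μ) + 0 := by
          gcongr
          · rw [hF1]
          · exact hNzero.le
      _ = ∫⁻ y, ((min (φ 0 x y) (φ 1 x y) : NNReal) : ℝ≥0∞) ∂μ
            + ∑ x' ∈ Finset.univ.filter (fun x' => x < x'), ∫⁻ y, (φ 1 x' y : ℝ≥0∞) ∂μ := by
          rw [add_zero, add_comm]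
  · intro hineq
    obtain ⟨ystar⟩ := (inferInstance : Nonempty Y)
    -- basic finiteness
    have hFle : ∀ (k : Fin 2) z, (∫⁻ y, (φ k z y : ℝ≥0∞) ∂μ) ≤ 1 := fun k z => by
      rw [← hmass k]
      exact Finset.single_le_sum (f := fun z => ∫⁻ y, (φ k z y : ℝ≥0∞) ∂μ)
        (fun _ _ => zero_le) (Finset.mem_univ z)
    have hFne : ∀ (k : Fin 2) z, (∫⁻ y, (φ k z y : ℝ≥0∞) ∂μ) ≠ ⊤ :=
      fun k z => ne_top_of_le_ne_top ENNReal.one_ne_top (hFle k z)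
    have hψleF : ∀ (k : Fin 2) z, (∫⁻ y, ((min (φ 0 z y) (φ 1 z y) : ℝ≥0) : ℝ≥0∞) ∂μ)
        ≤ ∫⁻ y, (φ k z y : ℝ≥0∞) ∂μ := by
      intro k z
      apply lintegral_mono
      intro y
      fin_cases k
      · exact ENNReal.coe_le_coe.mpr (min_le_left _ _)
      · exact ENNReal.coe_le_coe.mpr (min_le_right _ _)
    have hψne : ∀ z, (∫⁻ y, ((min (φ 0 z y) (φ 1 z y) : ℝ≥0) : ℝ≥0∞) ∂μ) ≠ ⊤ :=
      fun z => ne_top_of_le_ne_top (hFne 0 z) (hψleF 0 z)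
    -- real quantities
    set ψ : X → ℝ := fun z => (∫⁻ y, ((min (φ 0 z y) (φ 1 z y) : ℝ≥0) : ℝ≥0∞) ∂μ).toReal with hψdef
    set rF : Fin 2 → X → ℝ := fun k z => (∫⁻ y, (φ k z y : ℝ≥0∞) ∂μ).toReal with hrFdef
    set a : X → ℝ := fun z => rF 0 z - ψ z with hadef
    set b : X → ℝ := fun z => rF 1 z - ψ z with hbdef
    have ha : ∀ z, 0 ≤ a z := fun z => sub_nonneg.mpr (ENNReal.toReal_mono (hFne 0 z) (hψleF 0 z))
    have hb : ∀ z, 0 ≤ b z := fun z => sub_nonneg.mpr (ENNReal.toReal_mono (hFne 1 z) (hψleF 1 z))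
    have hsumF : ∀ k : Fin 2, ∑ z, rF k z = 1 := by
      intro k
      rw [hrFdef, ← ENNReal.toReal_sum (fun z _ => hFne k z), hmass k, ENNReal.toReal_one]
    have hT : ∑ z, a z = ∑ z, b z := by
      simp only [hadef, hbdef, Finset.sum_sub_distrib]
      rw [hsumF 0, hsumF 1]
    -- real form of the hypothesis
    have hineqR : ∀ z : X, ∑ x' ∈ Finset.univ.filter (fun x' => z ≤ x'), rF 0 x'
        ≤ ψ z + ∑ x' ∈ Finset.univ.filter (fun x' => z < x'), rF 1 x' := by
      intro z
      have h := hineq z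
      have hsne : (∑ x' ∈ Finset.univ.filter (fun x' => z < x'), ∫⁻ y, (φ 1 x' y : ℝ≥0∞) ∂μ) ≠ ⊤ :=
        (ENNReal.sum_lt_top.mpr (fun x' _ => (hFne 1 x').lt_top)).ne
      have hlne : (∑ x' ∈ Finset.univ.filter (fun x' => z ≤ x'), ∫⁻ y, (φ 0 x' y : ℝ≥0∞) ∂μ) ≠ ⊤ :=
        (ENNReal.sum_lt_top.mpr (fun x' _ => (hFne 0 x').lt_top)).ne
      have hrne : (∫⁻ y, ((min (φ 0 z y) (φ 1 z y) : ℝ≥0) : ℝ≥0∞) ∂μ)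
          + (∑ x' ∈ Finset.univ.filter (fun x' => z < x'), ∫⁻ y, (φ 1 x' y : ℝ≥0∞) ∂μ) ≠ ⊤ :=
        ENNReal.add_ne_top.mpr ⟨hψne z, hsne⟩
      have h2 := (ENNReal.toReal_le_toReal hlne hrne).mpr h
      rwa [ENNReal.toReal_add (hψne z) hsne,
        ENNReal.toReal_sum (fun x' _ => hFne 0 x'),
        ENNReal.toReal_sum (fun x' _ => hFne 1 x')] at h2
    -- cumulative inequality
    have hBA : ∀ z, SharpIV.hiCum b z ≤ SharpIV.loCum a z := by
      intro z
      have e1 : SharpIV.hiCum b z = ∑ w ∈ Finset.univ.filter (· ≤ z), rF 1 w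
          - ∑ w ∈ Finset.univ.filter (· ≤ z), ψ w := by
        rw [SharpIV.hiCum, ← Finset.sum_sub_distrib]
      have e2 : SharpIV.loCum a z = ∑ w ∈ Finset.univ.filter (· < z), rF 0 w
          - ∑ w ∈ Finset.univ.filter (· < z), ψ w := by
        rw [SharpIV.loCum, ← Finset.sum_sub_distrib]
      have e3 : ∑ w ∈ Finset.univ.filter (· ≤ z), ψ w
          = ψ z + ∑ w ∈ Finset.univ.filter (· < z), ψ w := SharpIV.hiCum_eq ψ z
      have e4 : ∑ w ∈ Finset.univ.filter (· ≤ z), rF 1 w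
          + ∑ w ∈ Finset.univ.filter (fun w => z < w), rF 1 w = 1 := by
        rw [← hsumF 1, ← Finset.sum_filter_add_sum_filter_not Finset.univ (· ≤ z) (rF 1)]
        congr 2
        ext w; simp [not_le]
      have e5 : ∑ w ∈ Finset.univ.filter (· < z), rF 0 w
          + ∑ w ∈ Finset.univ.filter (fun w => z ≤ w), rF 0 w = 1 := by
        rw [← hsumF 0, ← Finset.sum_filter_add_sum_filter_not Finset.univ (· < z) (rF 0)]
        congr 2
        ext w; simp [not_lt]
      have h6 := hineqR z
      rw [e1, e2]
      linarith
    -- coupling weights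
    set q : X → X → ℝ≥0∞ := fun z z' => volume (Set.Ico (SharpIV.loCum a z) (SharpIV.hiCum a z)
      ∩ Set.Ico (SharpIV.loCum b z') (SharpIV.hiCum b z')) with hqdef
    have hrow : ∀ z, ∑ z', q z z' = ENNReal.ofReal (a z) := fun z => SharpIV.row_sum a b ha hb hT z
    have hcol : ∀ z', ∑ z, q z z' = ENNReal.ofReal (b z') := by
      intro z'
      have h := SharpIV.row_sum b a hb ha hT.symm z'
      rw [← h]
      exact Finset.sum_congr rfl fun z _ => by rw [hqdef, Set.inter_comm]
    have hsupp : ∀ z z', z' ≤ z → q z z' = 0 := fun z z' h => by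
      simp only [hqdef]
      rw [SharpIV.support_empty a b hBA h ha, measure_empty]
    have hqrow_le : ∀ z z', q z z' ≤ ENNReal.ofReal (a z) := fun z z' => by
      rw [← hrow z]
      exact Finset.single_le_sum (f := fun z' => q z z') (fun _ _ => zero_le) (Finset.mem_univ z')
    have hqcol_le : ∀ z z', q z z' ≤ ENNReal.ofReal (b z') := fun z z' => by
      rw [← hcol z']
      exact Finset.single_le_sum (f := fun z => q z z') (fun _ _ => zero_le) (Finset.mem_univ z)
    -- densities and component measures
    set d : Fin 2 → X → Y → ℝ≥0 := fun k z y => φ k z y - min (φ 0 z y) (φ 1 z y) with hddef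
    have hmmeas : ∀ z, Measurable (fun y => min (φ 0 z y) (φ 1 z y)) :=
      fun z => (hφ 0 z).min (hφ 1 z)
    set σm : X → Measure Y :=
      fun z => μ.withDensity (fun y => ((min (φ 0 z y) (φ 1 z y) : ℝ≥0) : ℝ≥0∞)) with hσdef
    set ν : Fin 2 → X → Measure Y := fun k z => μ.withDensity (fun y => (d k z y : ℝ≥0∞)) with hνdef
    have hσν : ∀ (k : Fin 2) (z : X) (B : Set Y), MeasurableSet B →
        σm z B + ν k z B = ∫⁻ y in B, (φ k z y : ℝ≥0∞) ∂μ := by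
      intro k z B hB
      rw [hσdef, hνdef, withDensity_apply _ hB, withDensity_apply _ hB,
        ← lintegral_add_left ((hmmeas z).coe_nnreal_ennreal)]
      apply setLIntegral_congr_fun hB
      intro y _
      beta_reduce
      rw [← ENNReal.coe_add]
      congr 1
      rw [hddef]
      exact add_tsub_cancel_of_le (by fin_cases k; exacts [min_le_left _ _, min_le_right _ _])
    have hσuniv : ∀ z, σm z Set.univ = ∫⁻ y, ((min (φ 0 z y) (φ 1 z y) : ℝ≥0) : ℝ≥0∞) ∂μ := by
      intro z
      rw [hσdef, withDensity_apply _ MeasurableSet.univ, Measure.restrict_univ]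
    have hνuniv : ∀ (k : Fin 2) z, σm z Set.univ + ν k z Set.univ = ∫⁻ y, (φ k z y : ℝ≥0∞) ∂μ := by
      intro k z
      have h := hσν k z Set.univ MeasurableSet.univ
      rwa [Measure.restrict_univ] at h
    have hνne : ∀ (k : Fin 2) z, ν k z Set.univ ≠ ⊤ := by
      intro k z
      refine ne_top_of_le_ne_top (hFne k z) ?_
      rw [← hνuniv k z]
      exact le_add_self
    have hνuniv0 : ∀ z, ν 0 z Set.univ = ENNReal.ofReal (a z) := by
      intro z
      have h := hνuniv 0 z
      rw [hσuniv z] at h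
      have h2 := congrArg ENNReal.toReal h
      rw [ENNReal.toReal_add (hψne z) (hνne 0 z)] at h2
      have h3 : (ν 0 z Set.univ).toReal = a z := by
        rw [hadef]; simp only [hrFdef, hψdef]; linarith
      rw [← ENNReal.ofReal_toReal (hνne 0 z), h3]
    have hνuniv1 : ∀ z, ν 1 z Set.univ = ENNReal.ofReal (b z) := by
      intro z
      have h := hνuniv 1 z
      rw [hσuniv z] at h
      have h2 := congrArg ENNReal.toReal h
      rw [ENNReal.toReal_add (hψne z) (hνne 1 z)] at h2
      have h3 : (ν 1 z Set.univ).toReal = b z := by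
        rw [hbdef]; simp only [hrFdef, hψdef]; linarith
      rw [← ENNReal.ofReal_toReal (hνne 1 z), h3]
    -- product measures
    have hprodapp : ∀ z z' (s t : Set Y),
        ((ν 0 z).prod (ν 1 z')) (s ×ˢ t) = ν 0 z s * ν 1 z' t := by
      intro z z' s t
      haveI : SFinite (ν 1 z') := by simp only [hνdef]; infer_instance
      exact Measure.prod_prod s t
    -- scalars
    set c : X → X → ℝ≥0∞ :=
      fun z z' => q z z' * (ENNReal.ofReal (a z))⁻¹ * (ENNReal.ofReal (b z'))⁻¹ with hcdef
    have key0 : ∀ z (r : ℝ≥0∞), r ≤ ENNReal.ofReal (a z) →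
        ∑ z', c z z' * (r * ENNReal.ofReal (b z')) = r := by
      intro z r hr
      have step : ∀ z', c z z' * (r * ENNReal.ofReal (b z'))
          = q z z' * ((ENNReal.ofReal (a z))⁻¹ * r) := by
        intro z'
        by_cases hb0 : ENNReal.ofReal (b z') = 0
        · have hq0 : q z z' = 0 := le_antisymm (hb0 ▸ hqcol_le z z') (zero_le)
          rw [hcdef]; simp [hq0]
        · rw [hcdef]
          calc q z z' * (ENNReal.ofReal (a z))⁻¹ * (ENNReal.ofReal (b z'))⁻¹
                * (r * ENNReal.ofReal (b z'))
              = q z z' * ((ENNReal.ofReal (a z))⁻¹ * r)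
                * ((ENNReal.ofReal (b z'))⁻¹ * ENNReal.ofReal (b z')) := by ring
            _ = q z z' * ((ENNReal.ofReal (a z))⁻¹ * r) := by
                rw [ENNReal.inv_mul_cancel hb0 ENNReal.ofReal_ne_top, mul_one]
      rw [Finset.sum_congr rfl fun z' _ => step z', ← Finset.sum_mul, hrow z]
      by_cases ha0 : ENNReal.ofReal (a z) = 0
      · have hr0 : r = 0 := le_antisymm (ha0 ▸ hr) (zero_le)
        simp [hr0]
      · rw [← mul_assoc, ENNReal.mul_inv_cancel ha0 ENNReal.ofReal_ne_top, one_mul]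
    have key1 : ∀ z' (r : ℝ≥0∞), r ≤ ENNReal.ofReal (b z') →
        ∑ z, c z z' * (ENNReal.ofReal (a z) * r) = r := by
      intro z' r hr
      have step : ∀ z, c z z' * (ENNReal.ofReal (a z) * r)
          = q z z' * ((ENNReal.ofReal (b z'))⁻¹ * r) := by
        intro z
        by_cases ha0 : ENNReal.ofReal (a z) = 0
        · have hq0 : q z z' = 0 := le_antisymm (ha0 ▸ hqrow_le z z') (zero_le)
          rw [hcdef]; simp [hq0]
        · rw [hcdef]
          calc q z z' * (ENNReal.ofReal (a z))⁻¹ * (ENNReal.ofReal (b z'))⁻¹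
                * (ENNReal.ofReal (a z) * r)
              = q z z' * ((ENNReal.ofReal (b z'))⁻¹ * r)
                * ((ENNReal.ofReal (a z))⁻¹ * ENNReal.ofReal (a z)) := by ring
            _ = q z z' * ((ENNReal.ofReal (b z'))⁻¹ * r) := by
                rw [ENNReal.inv_mul_cancel ha0 ENNReal.ofReal_ne_top, mul_one]
      rw [Finset.sum_congr rfl fun z _ => step z, ← Finset.sum_mul, hcol z']
      by_cases hb0 : ENNReal.ofReal (b z') = 0
      · have hr0 : r = 0 := le_antisymm (hb0 ▸ hr) (zero_le)
        simp [hr0]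
      · rw [← mul_assoc, ENNReal.mul_inv_cancel hb0 ENNReal.ofReal_ne_top, one_mul]
    -- the maps into response-type space
    set tzOf : X → X → (Fin 2 → X) := fun z z' k => if k = 0 then z else z' with htzdef
    have htz0 : ∀ z z', tzOf z z' 0 = z := fun z z' => by simp [htzdef]
    have htz1 : ∀ z z', tzOf z z' 1 = z' := fun z z' => by
      simp only [htzdef]
      norm_num [Fin.ext_iff]
    set stay : X → Y → (Fin 2 → X) × (X → Y) :=
      fun z y => (tzOf z z, fun w => if w = z then y else ystar) with hstaydef
    set move : X → X → Y × Y → (Fin 2 → X) × (X → Y) := fun z z' p =>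
      (tzOf z z', fun w => if w = z then p.1 else if w = z' then p.2 else ystar) with hmovedef
    have hstaym : ∀ z, Measurable (stay z) := by
      intro z
      rw [hstaydef]
      apply Measurable.prodMk measurable_const
      apply measurable_pi_lambda
      intro w
      by_cases hw : w = z
      · simp only [if_pos hw]; exact measurable_id
      · simp only [if_neg hw]; exact measurable_const
    have hmovem : ∀ z z', Measurable (move z z') := by
      intro z z'
      rw [hmovedef]
      apply Measurable.prodMk measurable_const
      apply measurable_pi_lambda
      intro w
      by_cases h1 : w = z
      · simp only [if_pos h1]; exact measurable_fst
      · simp only [if_neg h1]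
        by_cases h2 : w = z'
        · simp only [if_pos h2]; exact measurable_snd
        · simp only [if_neg h2]; exact measurable_const
    -- the candidate measure
    set g : Measure ((Fin 2 → X) × (X → Y)) :=
      (∑ z, (σm z).map (stay z))
        + ∑ z, ∑ z', c z z' • (((ν 0 z).prod (ν 1 z')).map (move z z')) with hgdef
    have gapply : ∀ S : Set ((Fin 2 → X) × (X → Y)), MeasurableSet S →
        g S = (∑ z, σm z (stay z ⁻¹' S))
          + ∑ z, ∑ z', c z z' * ((ν 0 z).prod (ν 1 z')) (move z z' ⁻¹' S) := by
      intro S hS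
      rw [hgdef, Measure.add_apply, Measure.finset_sum_apply, Measure.finset_sum_apply]
      congr 1
      · exact Finset.sum_congr rfl fun z _ => Measure.map_apply (hstaym z) hS
      · refine Finset.sum_congr rfl fun z _ => ?_
        rw [Measure.finset_sum_apply]
        refine Finset.sum_congr rfl fun z' _ => ?_
        rw [Measure.smul_apply, Measure.map_apply (hmovem z z') hS, smul_eq_mul]
    -- total mass
    have huniv : g Set.univ = 1 := by
      rw [gapply Set.univ MeasurableSet.univ]
      simp only [Set.preimage_univ]
      have h3 : ∀ z z', ((ν 0 z).prod (ν 1 z')) Set.univ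
          = ENNReal.ofReal (a z) * ENNReal.ofReal (b z') := by
        intro z z'
        rw [← Set.univ_prod_univ, hprodapp, hνuniv0, hνuniv1]
      calc (∑ z, σm z Set.univ) + ∑ z, ∑ z', c z z' * ((ν 0 z).prod (ν 1 z')) Set.univ
          = (∑ z, σm z Set.univ) + ∑ z, ENNReal.ofReal (a z) := by
            congr 1
            refine Finset.sum_congr rfl fun z _ => ?_
            rw [Finset.sum_congr rfl fun z' _ => by rw [h3 z z']]
            exact key0 z (ENNReal.ofReal (a z)) le_rfl
        _ = ∑ z, (σm z Set.univ + ν 0 z Set.univ) := by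
            rw [← Finset.sum_add_distrib]
            exact Finset.sum_congr rfl fun z _ => by rw [hνuniv0 z]
        _ = ∑ z, ∫⁻ y, (φ 0 z y : ℝ≥0∞) ∂μ :=
            Finset.sum_congr rfl fun z _ => hνuniv 0 z
        _ = 1 := hmass 0
    -- measurability of the relevant sets
    have hSmeas : ∀ (k : Fin 2) (x : X) (B : Set Y), MeasurableSet B →
        MeasurableSet {t : (Fin 2 → X) × (X → Y) | t.1 k = x ∧ t.2 x ∈ B} := by
      intro k x B hB
      have : {t : (Fin 2 → X) × (X → Y) | t.1 k = x ∧ t.2 x ∈ B}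
          = ((fun t : (Fin 2 → X) × (X → Y) => t.1 k) ⁻¹' {x})
            ∩ ((fun t : (Fin 2 → X) × (X → Y) => t.2 x) ⁻¹' B) := rfl
      rw [this]
      exact (((measurable_pi_apply k).comp measurable_fst) (measurableSet_singleton x)).inter
        (((measurable_pi_apply x).comp measurable_snd) hB)
    refine ⟨g, ⟨huniv⟩, ?_, ?_⟩
    · -- consistency
      intro k x B hB
      fin_cases k
      · -- k = 0
        show g {t : (Fin 2 → X) × (X → Y) | t.1 0 = x ∧ t.2 x ∈ B} = ∫⁻ y in B, (φ 0 x y : ℝ≥0∞) ∂μ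
        have hstaypre : ∀ z, stay z ⁻¹' {t : (Fin 2 → X) × (X → Y) | t.1 0 = x ∧ t.2 x ∈ B}
            = if z = x then B else ∅ := by
          intro z
          by_cases hz : z = x
          · subst hz
            ext y
            simp [hstaydef, htz0]
          · ext y
            simp [hstaydef, htz0, hz]
        have hmovepre : ∀ z z', move z z' ⁻¹' {t : (Fin 2 → X) × (X → Y) | t.1 0 = x ∧ t.2 x ∈ B}
            = if z = x then B ×ˢ Set.univ else ∅ := by
          intro z z'
          by_cases hz : z = x
          · subst hz
            ext p
            simp [hmovedef, htz0]
          · ext p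
            simp [hmovedef, htz0, hz]
        have hsum1 : ∑ z, σm z (stay z ⁻¹' {t : (Fin 2 → X) × (X → Y) | t.1 0 = x ∧ t.2 x ∈ B})
            = σm x B := by
          rw [Finset.sum_eq_single x]
          · rw [hstaypre x, if_pos rfl]
          · intro z _ hz; rw [hstaypre z, if_neg hz, measure_empty]
          · exact fun h => absurd (Finset.mem_univ x) h
        have hsum2 : ∑ z, ∑ z', c z z' * ((ν 0 z).prod (ν 1 z'))
              (move z z' ⁻¹' {t : (Fin 2 → X) × (X → Y) | t.1 0 = x ∧ t.2 x ∈ B})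
            = ν 0 x B := by
          rw [Finset.sum_eq_single x]
          · have hterm : ∀ z', ((ν 0 x).prod (ν 1 z'))
                (move x z' ⁻¹' {t : (Fin 2 → X) × (X → Y) | t.1 0 = x ∧ t.2 x ∈ B})
                = ν 0 x B * ENNReal.ofReal (b z') := by
              intro z'
              rw [hmovepre, if_pos rfl, hprodapp, hνuniv1]
            rw [Finset.sum_congr rfl fun z' _ => by rw [hterm z']]
            exact key0 x (ν 0 x B)
              (by rw [← hνuniv0 x]; exact measure_mono (Set.subset_univ B))
          · intro z _ hz
            apply Finset.sum_eq_zero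
            intro z' _
            rw [hmovepre, if_neg hz, measure_empty, mul_zero]
          · exact fun h => absurd (Finset.mem_univ x) h
        rw [gapply _ (hSmeas 0 x B hB), hsum1, hsum2]
        exact hσν 0 x B hB
      · -- k = 1
        show g {t : (Fin 2 → X) × (X → Y) | t.1 1 = x ∧ t.2 x ∈ B} = ∫⁻ y in B, (φ 1 x y : ℝ≥0∞) ∂μ
        have hstaypre : ∀ z, stay z ⁻¹' {t : (Fin 2 → X) × (X → Y) | t.1 1 = x ∧ t.2 x ∈ B}
            = if z = x then B else ∅ := by
          intro z
          by_cases hz : z = x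
          · subst hz
            ext y
            simp [hstaydef, htz1]
          · ext y
            simp [hstaydef, htz1, hz]
        have hmovepre : ∀ z z', move z z' ⁻¹' {t : (Fin 2 → X) × (X → Y) | t.1 1 = x ∧ t.2 x ∈ B}
            = if z' = x then (if z = x then B ×ˢ Set.univ else Set.univ ×ˢ B) else ∅ := by
          intro z z'
          ext p
          simp only [hmovedef, Set.mem_preimage, Set.mem_setOf_eq, htz1]
          by_cases hz' : z' = x
          · by_cases hz : z = x
            · simp [hz', hz]
            · have hxz : ¬ x = z := fun h => hz h.symm
              have hxz' : x = z' := hz'.symm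
              rw [if_pos hz', if_neg hz, if_neg hxz, if_pos hxz']
              simp [hz']
          · rw [if_neg hz']
            simp [hz']
        have hsum1 : ∑ z, σm z (stay z ⁻¹' {t : (Fin 2 → X) × (X → Y) | t.1 1 = x ∧ t.2 x ∈ B})
            = σm x B := by
          rw [Finset.sum_eq_single x]
          · rw [hstaypre x, if_pos rfl]
          · intro z _ hz; rw [hstaypre z, if_neg hz, measure_empty]
          · exact fun h => absurd (Finset.mem_univ x) h
        have hcxx : c x x = 0 := by
          rw [hcdef]
          simp [hsupp x x le_rfl]
        have hsum2 : ∑ z, ∑ z', c z z' * ((ν 0 z).prod (ν 1 z'))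
              (move z z' ⁻¹' {t : (Fin 2 → X) × (X → Y) | t.1 1 = x ∧ t.2 x ∈ B})
            = ν 1 x B := by
          have hin : ∀ z, ∑ z', c z z' * ((ν 0 z).prod (ν 1 z'))
              (move z z' ⁻¹' {t : (Fin 2 → X) × (X → Y) | t.1 1 = x ∧ t.2 x ∈ B})
              = c z x * (ENNReal.ofReal (a z) * ν 1 x B) := by
            intro z
            rw [Finset.sum_eq_single x]
            · by_cases hz : z = x
              · subst hz
                rw [hcxx, zero_mul, zero_mul]
              · rw [hmovepre, if_pos rfl, if_neg hz, hprodapp, hνuniv0]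
            · intro z' _ hz'
              rw [hmovepre, if_neg hz', measure_empty, mul_zero]
            · exact fun h => absurd (Finset.mem_univ x) h
          rw [Finset.sum_congr rfl fun z _ => hin z]
          exact key1 x (ν 1 x B)
            (by rw [← hνuniv1 x]; exact measure_mono (Set.subset_univ B))
        rw [gapply _ (hSmeas 1 x B hB), hsum1, hsum2]
        exact hσν 1 x B hB
    · -- monotone marginal
      intro tz hlt
      have hSm : MeasurableSet {t : (Fin 2 → X) × (X → Y) | t.1 = tz} := by
        have : {t : (Fin 2 → X) × (X → Y) | t.1 = tz}
            = ⋂ k, ((fun t : (Fin 2 → X) × (X → Y) => t.1 k) ⁻¹' {tz k}) := by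
          ext t
          simp [funext_iff]
        rw [this]
        exact MeasurableSet.iInter fun k =>
          ((measurable_pi_apply k).comp measurable_fst) (measurableSet_singleton _)
      rw [gapply _ hSm]
      have h1 : ∀ z, stay z ⁻¹' {t : (Fin 2 → X) × (X → Y) | t.1 = tz} = ∅ := by
        intro z
        ext y
        simp only [Set.mem_preimage, Set.mem_setOf_eq, Set.mem_empty_iff_false, iff_false,
          hstaydef]
        intro h
        have h0 : tzOf z z 0 = tz 0 := congrFun h 0
        have h1' : tzOf z z 1 = tz 1 := congrFun h 1
        rw [htz0] at h0
        rw [htz1] at h1'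
        exact (ne_of_lt hlt) (h1'.symm.trans h0)
      have h2 : ∀ z z', c z z' * ((ν 0 z).prod (ν 1 z'))
          (move z z' ⁻¹' {t : (Fin 2 → X) × (X → Y) | t.1 = tz}) = 0 := by
        intro z z'
        by_cases h : tzOf z z' = tz
        · have hz : z = tz 0 := by rw [← htz0 z z', h]
          have hz' : z' = tz 1 := by rw [← htz1 z z', h]
          have hq0 : q z z' = 0 := hsupp z z' (by rw [hz, hz']; exact le_of_lt hlt)
          rw [hcdef]
          simp [hq0]
        · have hpre : move z z' ⁻¹' {t : (Fin 2 → X) × (X → Y) | t.1 = tz} = ∅ := by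
            ext p
            simp only [Set.mem_preimage, Set.mem_setOf_eq, Set.mem_empty_iff_false, iff_false,
              hmovedef]
            exact h
          rw [hpre, measure_empty, mul_zero]
      rw [Finset.sum_congr rfl fun z _ => by rw [h1 z, measure_empty]]
      rw [Finset.sum_congr rfl fun z _ => Finset.sum_congr rfl fun z' _ => h2 z z']
      simp
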